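/- Let p be a prime and n a positive integer with p ∤ n. Let V be the quotient of the permutation F_p-representation of S_n on F_p^n by the span of the all-ones vector. If p is odd, then H^1(S_n, V) = 0. If p = 2 and n ≥ 3, then H^1(S_n, V) = 0. -/

import Mathlib

/-- The quotient representation on `M ⧸ S` for an invariant submodule `S`. -/
noncomputable def Representation.quot {k G M : Type} [CommRing k] [Group G] [AddCommGroup M]
    [Module k M] (ρ : Representation k G M) (S : Submodule k M)
    (hS : ∀ g : G, ∀ x ∈ S, ρ g x ∈ S) : Representation k G (M ⧸ S) where
  toFun g := S.mapQ S (ρ g) fun x hx => hS g x hx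
  map_one' := Submodule.linearMap_qext _ (by ext x; simp)
  map_mul' g h := Submodule.linearMap_qext _ (by ext x; simp [Submodule.mapQ_apply])

/-- The permutation representation of `S_n` on `F_p[X]`, `X = {1,...,n}`. -/
noncomputable def permRep (p n : ℕ) :
    Representation (ZMod p) (Equiv.Perm (Fin n)) (Fin n →₀ ZMod p) where
  toFun σ := Finsupp.lmapDomain (ZMod p) (ZMod p) (σ • ·)
  map_one' := by ext; simp
  map_mul' x y := by ext; simp [mul_smul]

/-- The sum of all basis vectors `e_1 + ... + e_n`. -/
noncomputable def allOnes (p n : ℕ) : Fin n →₀ ZMod p := ∑ i, Finsupp.single i 1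

/-- The submodule `D` spanned by the sum of all basis vectors. -/
noncomputable def allOnesLine (p n : ℕ) : Submodule (ZMod p) (Fin n →₀ ZMod p) :=
  Submodule.span (ZMod p) {allOnes p n}

lemma permRep_allOnes (p n : ℕ) (σ : Equiv.Perm (Fin n)) :
    permRep p n σ (allOnes p n) = allOnes p n := by
  unfold permRep allOnes
  rw [map_sum]
  refine Fintype.sum_equiv σ _ _ fun i => ?_
  show Finsupp.mapDomain _ _ = _
  rw [Finsupp.mapDomain_single]
  rfl

lemma allOnesLine_invariant (p n : ℕ) (σ : Equiv.Perm (Fin n)) :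
    ∀ x ∈ allOnesLine p n, permRep p n σ x ∈ allOnesLine p n := by
  intro x hx
  obtain ⟨c, rfl⟩ := Submodule.mem_span_singleton.1 hx
  rw [map_smul, permRep_allOnes]
  exact Submodule.smul_mem _ _ (Submodule.mem_span_singleton_self _)

/-- The quotient `V = F_p[X]/D` of the permutation representation by the all-ones line. -/
noncomputable def stdQuotRep (p n : ℕ) :
    Representation (ZMod p) (Equiv.Perm (Fin n)) ((Fin n →₀ ZMod p) ⧸ allOnesLine p n) :=
  (permRep p n).quot (allOnesLine p n) (allOnesLine_invariant p n)

lemma permRep_apply (p n : ℕ) (σ : Equiv.Perm (Fin n)) (w : Fin n →₀ ZMod p) (x : Fin n) :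
    permRep p n σ w x = w (σ⁻¹ x) := by
  show Finsupp.mapDomain (fun y : Fin n => σ • y) w x = _
  have h := Finsupp.mapDomain_apply (f := fun y : Fin n => σ • y) σ.injective w (σ⁻¹ x)
  rw [Equiv.Perm.smul_def, show σ (σ⁻¹ x) = x by simp] at h
  exact h

lemma allOnes_apply (p n : ℕ) (x : Fin n) : allOnes p n x = 1 := by
  rw [allOnes]
  rw [Finsupp.finset_sum_apply]
  simp [Finsupp.single_apply]

noncomputable def sumCoeff (p n : ℕ) : (Fin n →₀ ZMod p) →ₗ[ZMod p] ZMod p :=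
  Finsupp.lsum (ZMod p) fun _ => LinearMap.id

lemma sumCoeff_single (p n : ℕ) (i : Fin n) (c : ZMod p) :
    sumCoeff p n (Finsupp.single i c) = c := by
  simp [sumCoeff]

lemma sumCoeff_allOnes (p n : ℕ) : sumCoeff p n (allOnes p n) = n := by
  rw [allOnes, map_sum]
  simp [sumCoeff_single]

lemma sumCoeff_perm (p n : ℕ) (σ : Equiv.Perm (Fin n)) (w : Fin n →₀ ZMod p) :
    sumCoeff p n (permRep p n σ w) = sumCoeff p n w := by
  induction w using Finsupp.induction_linear with
  | zero => simp
  | add f g hf hg => rw [map_add, map_add, map_add, hf, hg]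
  | single i c =>
      show sumCoeff p n (Finsupp.mapDomain _ _) = _
      rw [Finsupp.mapDomain_single, sumCoeff_single, sumCoeff_single]

noncomputable def secAux (p n : ℕ) : (Fin n →₀ ZMod p) →ₗ[ZMod p] (Fin n →₀ ZMod p) :=
  LinearMap.id - (sumCoeff p n).smulRight (((n : ZMod p))⁻¹ • allOnes p n)

lemma secAux_apply (p n : ℕ) (w : Fin n →₀ ZMod p) :
    secAux p n w = w - sumCoeff p n w • ((n : ZMod p))⁻¹ • allOnes p n := by
  simp [secAux]

lemma secAux_allOnes (p n : ℕ) (h : (n : ZMod p) ≠ 0) [Fact p.Prime] :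
    secAux p n (allOnes p n) = 0 := by
  rw [secAux_apply, sumCoeff_allOnes, smul_smul, mul_inv_cancel₀ h, one_smul, sub_self]

lemma secAux_perm (p n : ℕ) (σ : Equiv.Perm (Fin n)) (w : Fin n →₀ ZMod p) :
    secAux p n (permRep p n σ w) = permRep p n σ (secAux p n w) := by
  rw [secAux_apply, secAux_apply, map_sub, map_smul, map_smul, permRep_allOnes, sumCoeff_perm]

lemma shapiro_inj (p n : ℕ) (x0 : Fin n) (F : Equiv.Perm (Fin n) → (Fin n →₀ ZMod p))
    (hF : ∀ σ τ, F (σ * τ) = permRep p n σ (F τ) + F σ)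
    (h0 : ∀ σ : Equiv.Perm (Fin n), σ x0 = x0 → F σ x0 = 0) :
    ∃ w, ∀ σ, F σ = permRep p n σ w - w := by
  set v : Fin n →₀ ZMod p :=
    Finsupp.equivFunOnFinite.symm (fun x => F (Equiv.swap x0 x) x) with hv
  have hvx : ∀ x, v x = F (Equiv.swap x0 x) x := fun x => rfl
  have main : ∀ (σ : Equiv.Perm (Fin n)) (x : Fin n), F σ x = v x - v (σ⁻¹ x) := by
    intro σ x
    set y := σ⁻¹ x with hy
    set h : Equiv.Perm (Fin n) := (Equiv.swap x0 y)⁻¹ * σ⁻¹ * Equiv.swap x0 x with hh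
    have hhx0 : h x0 = x0 := by
      simp only [hh, Equiv.Perm.mul_apply, Equiv.swap_apply_left, Equiv.swap_inv]
      rw [← hy, Equiv.swap_apply_right]
    have hdecomp : Equiv.swap x0 x = σ * (Equiv.swap x0 y * h) := by
      rw [hh]; group
    have := congrArg (· x) (congrArg F hdecomp)
    rw [hF σ (Equiv.swap x0 y * h), hF (Equiv.swap x0 y) h] at this
    rw [Finsupp.add_apply, permRep_apply, Finsupp.add_apply, permRep_apply, ← hy] at this
    have hyy : (Equiv.swap x0 y)⁻¹ y = x0 := by
      rw [Equiv.swap_inv, Equiv.swap_apply_right]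
    rw [hyy, h0 h hhx0, zero_add, ← hvx x, ← hvx y] at this
    rw [this]; ring
  refine ⟨-v, fun σ => ?_⟩
  ext x
  rw [Finsupp.sub_apply, permRep_apply, Finsupp.neg_apply, Finsupp.neg_apply, main σ x]
  ring

lemma hom_eq_sign (p : ℕ) {β : Type} [DecidableEq β] [Fintype β]
    (φ : Equiv.Perm β → ZMod p) (hφ : ∀ σ τ, φ (σ * τ) = φ σ + φ τ) :
    ∃ c : ZMod p, c + c = 0 ∧ ∀ σ, φ σ = if Equiv.Perm.sign σ = 1 then 0 else c := by
  have h1 : φ 1 = 0 := by have := hφ 1 1; simpa using this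
  by_cases hβ : ∃ a b : β, a ≠ b
  · obtain ⟨a, b, hab⟩ := hβ
    have hc : φ (Equiv.swap a b) + φ (Equiv.swap a b) = 0 := by
      rw [← hφ, Equiv.swap_mul_self, h1]
    refine ⟨φ (Equiv.swap a b), hc, ?_⟩
    · have hswap : ∀ x y : β, x ≠ y → φ (Equiv.swap x y) = φ (Equiv.swap a b) := by
        intro x y hxy
        obtain ⟨g, hg⟩ := Equiv.Perm.isConj_swap hxy hab
        have := congrArg φ hg.eq
        rw [hφ, hφ, add_comm (φ (Equiv.swap a b))] at this
        exact add_left_cancel this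
      intro σ
      refine Equiv.Perm.swap_induction_on σ ?_ ?_
      · simp [h1]
      · intro σ x y hxy IH
        rw [hφ, hswap x y hxy, IH, map_mul, Equiv.Perm.sign_swap hxy]
        rcases Int.units_eq_one_or (Equiv.Perm.sign σ) with hs | hs <;> rw [hs] <;>
          simp [hc]
  · refine ⟨0, by simp, fun σ => ?_⟩
    have hσ : σ = 1 := by
      ext x
      by_contra hx
      exact hβ ⟨σ x, x, hx⟩
    rw [hσ, h1]
    simp

lemma key (p n : ℕ) (hp : p.Prime) (hn : 0 < n) (hpn : ¬ p ∣ n) :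
    Subsingleton (groupCohomology.H1 (Rep.of (stdQuotRep p n))) := by
  haveI : Fact p.Prime := ⟨hp⟩
  haveI : NeZero p := ⟨hp.ne_zero⟩
  have hnz : (n : ZMod p) ≠ 0 := by
    rwa [Ne, ZMod.natCast_eq_zero_iff]
  refine subsingleton_of_forall_eq 0 fun a => ?_
  induction a using groupCohomology.H1_induction_on with | h f => ?_
  rw [groupCohomology.H1π_eq_zero_iff]
  have hf := (groupCohomology.mem_cocycles₁_iff
    (A := Rep.of (stdQuotRep p n)) f).1 f.2
  set x0 : Fin n := ⟨0, hn⟩ with hx0def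
  have hker : allOnesLine p n ≤ LinearMap.ker (secAux p n) := by
    rw [allOnesLine, Submodule.span_le, Set.singleton_subset_iff]
    exact LinearMap.mem_ker.mpr (secAux_allOnes p n hnz)
  set sec : ((Fin n →₀ ZMod p) ⧸ allOnesLine p n) →ₗ[ZMod p] (Fin n →₀ ZMod p) :=
    (allOnesLine p n).liftQ (secAux p n) hker with hsecdef
  have hmk : ∀ (σ : Equiv.Perm (Fin n)) (w : Fin n →₀ ZMod p),
      stdQuotRep p n σ (Submodule.Quotient.mk w) = Submodule.Quotient.mk (permRep p n σ w) :=
    fun σ w => rfl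
  have hsec : ∀ v, Submodule.Quotient.mk (sec v) = v := by
    intro v
    obtain ⟨w, rfl⟩ := Submodule.Quotient.mk_surjective _ v
    rw [hsecdef, Submodule.liftQ_apply, secAux_apply, Submodule.Quotient.eq]
    have : w - sumCoeff p n w • ((n : ZMod p))⁻¹ • allOnes p n - w
        = -(sumCoeff p n w • ((n : ZMod p))⁻¹ • allOnes p n) := by abel
    rw [this]
    exact Submodule.neg_mem _ (Submodule.smul_mem _ _ (Submodule.smul_mem _ _
      (Submodule.mem_span_singleton_self _)))
  have hsecρ : ∀ (σ : Equiv.Perm (Fin n)) v,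
      sec (stdQuotRep p n σ v) = permRep p n σ (sec v) := by
    intro σ v
    obtain ⟨w, rfl⟩ := Submodule.Quotient.mk_surjective _ v
    rw [hmk, hsecdef, Submodule.liftQ_apply, Submodule.liftQ_apply, secAux_perm]
  set F : Equiv.Perm (Fin n) → (Fin n →₀ ZMod p) := fun σ => sec (f σ) with hFdef
  have hFc : ∀ σ τ, F (σ * τ) = permRep p n σ (F τ) + F σ := by
    intro σ τ
    rw [hFdef]
    simp only
    rw [hf σ τ, map_add, ← hsecρ σ (f τ)]
  set φ : Equiv.Perm {x : Fin n // x ≠ x0} → ZMod p :=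
    fun π => F (Equiv.Perm.ofSubtype π) x0 with hφdef
  have hofix : ∀ π : Equiv.Perm {x : Fin n // x ≠ x0}, Equiv.Perm.ofSubtype π x0 = x0 :=
    fun π => Equiv.Perm.ofSubtype_apply_of_not_mem π (by simp)
  have hoinv : ∀ π : Equiv.Perm {x : Fin n // x ≠ x0}, (Equiv.Perm.ofSubtype π)⁻¹ x0 = x0 := by
    intro π
    rw [Equiv.Perm.inv_eq_iff_eq]
    exact (hofix π).symm
  have hφadd : ∀ π ρ', φ (π * ρ') = φ π + φ ρ' := by
    intro π ρ'
    rw [hφdef]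
    simp only
    rw [map_mul, hFc, Finsupp.add_apply, permRep_apply, hoinv, add_comm]
  obtain ⟨c, hc2, hcφ⟩ := hom_eq_sign p φ hφadd
  set ε : Equiv.Perm (Fin n) → ZMod p :=
    fun σ => if Equiv.Perm.sign σ = 1 then 0 else c with hεdef
  have hεadd : ∀ σ τ, ε (σ * τ) = ε σ + ε τ := by
    intro σ τ
    rw [hεdef]
    simp only [map_mul]
    rcases Int.units_eq_one_or (Equiv.Perm.sign σ) with hs | hs <;>
      rcases Int.units_eq_one_or (Equiv.Perm.sign τ) with ht | ht <;>
      rw [hs, ht] <;> simp [hc2]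
  set F' : Equiv.Perm (Fin n) → (Fin n →₀ ZMod p) :=
    fun σ => F σ - ε σ • allOnes p n with hF'def
  have hF'c : ∀ σ τ, F' (σ * τ) = permRep p n σ (F' τ) + F' σ := by
    intro σ τ
    rw [hF'def]
    simp only
    rw [hFc, hεadd, map_sub, map_smul, permRep_allOnes, add_smul]
    abel
  have hF'0 : ∀ σ : Equiv.Perm (Fin n), σ x0 = x0 → F' σ x0 = 0 := by
    intro σ hσ
    have h₁ : ∀ x : Fin n, σ x ≠ x0 ↔ x ≠ x0 := by
      intro x
      constructor
      · intro hσx hx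
        exact hσx (by rw [hx, hσ])
      · intro hx hσx
        exact hx (σ.injective (by rw [hσx, hσ]))
    have h₂ : ∀ x : Fin n, σ x ≠ x → x ≠ x0 := by
      rintro x hx rfl
      exact hx hσ
    have hrep : Equiv.Perm.ofSubtype (σ.subtypePerm h₁) = σ :=
      Equiv.Perm.ofSubtype_subtypePerm h₁ h₂
    have hsign : Equiv.Perm.sign (σ.subtypePerm h₁) = Equiv.Perm.sign σ :=
      Equiv.Perm.sign_subtypePerm σ h₁ h₂
    have hFσ : F σ x0 = ε σ := by
      have := hcφ (σ.subtypePerm h₁)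
      rw [hφdef] at this
      simp only at this
      rw [hrep, hsign] at this
      rw [this, hεdef]
    rw [hF'def]
    simp only
    rw [Finsupp.sub_apply, Finsupp.smul_apply, allOnes_apply, hFσ, smul_eq_mul, mul_one, sub_self]
  obtain ⟨w, hw⟩ := shapiro_inj p n x0 F' hF'c hF'0
  refine ⟨Submodule.Quotient.mk w, funext fun g => ?_⟩
  rw [groupCohomology.d₀₁_hom_apply]
  have h1 : (Rep.of (stdQuotRep p n)).ρ g (Submodule.Quotient.mk w) - Submodule.Quotient.mk w
      = (allOnesLine p n).mkQ (permRep p n g w - w) := by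
    rw [map_sub, Submodule.mkQ_apply, Submodule.mkQ_apply]
    rfl
  rw [h1, ← hw g, hF'def]
  simp only
  rw [map_sub, map_smul, Submodule.mkQ_apply, Submodule.mkQ_apply]
  have hz : (Submodule.Quotient.mk (allOnes p n) :
      (Fin n →₀ ZMod p) ⧸ allOnesLine p n) = 0 :=
    (Submodule.Quotient.mk_eq_zero _).mpr (Submodule.mem_span_singleton_self _)
  rw [hz, smul_zero, sub_zero, hFdef]
  simp only
  rw [hsec]

/-- Let `p` be a prime with `p ∤ n` and `V = F_p^n / span(1,…,1)` the
quotient of the permutation representation of `S_n`.  If `p` is odd then `H¹(S_n, V) = 0`,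
and if `p = 2` and `n ≥ 3` then `H¹(S_n, V) = 0`. -/
theorem statement1 (p n : ℕ) (hp : p.Prime) (hn : 0 < n) (hpn : ¬ p ∣ n) :
    (Odd p → Subsingleton (groupCohomology.H1 (Rep.of (stdQuotRep p n)))) ∧
    (p = 2 → 3 ≤ n → Subsingleton (groupCohomology.H1 (Rep.of (stdQuotRep p n)))) :=
  ⟨fun _ => key p n hp hn hpn, fun _ _ => key p n hp hn hpn⟩
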